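/- The third symmetric power Sym³(S¹) = (S¹)³/S₃ of the circle is homotopy equivalent to S¹. -/

import Mathlib

abbrev Ch (ι : Type) := ι → ZMod 2

/-- basis chain corresponding to a single cell -/
def ee {ι : Type} [DecidableEq ι] (i : ι) : Ch ι := Pi.single i 1

/-- the ℤ/2-linear boundary map determined by its values on cells -/
def mkBd {ι κ : Type} [Fintype ι] (d : ι → Ch κ) : Ch ι →ₗ[ZMod 2] Ch κ where
  toFun f := ∑ i, f i • d i
  map_add' x y := by simp [add_smul, Finset.sum_add_distrib]
  map_smul' c x := by simp [Finset.smul_sum, smul_smul]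


/-- the setoid on (S¹)³ identifying triples up to permutation of coordinates -/
def sym3Setoid : Setoid (Fin 3 → Circle) where
  r f g := ∃ σ : Equiv.Perm (Fin 3), f ∘ σ = g
  iseqv := by
    refine ⟨fun f => ⟨1, ?_⟩, fun {f g} ⟨σ, h⟩ => ⟨σ⁻¹, ?_⟩,
      fun {f g h} ⟨σ, h1⟩ ⟨τ, h2⟩ => ⟨σ * τ, ?_⟩⟩
    · ext x; simp
    · subst h; ext x; simp
    · subst h1; subst h2; ext x; simp

/-- Sym³(S¹) = (S¹)³/S₃ with the quotient topology -/
def Sym3Circle : Type := Quotient sym3Setoid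

noncomputable instance : TopologicalSpace Sym3Circle := instTopologicalSpaceQuotient

open Real Topology

namespace Sym3Aux
noncomputable section

def E (x : Fin 3 → ℝ) : Fin 3 → Circle := fun i => Circle.exp (x i)
def F (x : Fin 3 → ℝ) : Sym3Circle := Quotient.mk sym3Setoid (E x)
def srt (x : Fin 3 → ℝ) : Prop := x 0 ≤ x 1 ∧ x 1 ≤ x 2 ∧ x 2 ≤ x 0 + 2*π
def ρ (x : Fin 3 → ℝ) : Fin 3 → ℝ := ![x 1, x 2, x 0 + 2*π]
def μ (x : Fin 3 → ℝ) : ℝ := (x 0 + x 1 + x 2)/3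
def bt (m : ℝ) : Fin 3 → ℝ := ![m - 2*π/3, m, m + 2*π/3]
def shr (t : ℝ) (x : Fin 3 → ℝ) : Fin 3 → ℝ := fun i => (1-t) * x i + t * bt (μ x) i

lemma ext3 {f g : Fin 3 → ℝ} (h0 : f 0 = g 0) (h1 : f 1 = g 1) (h2 : f 2 = g 2) : f = g := by
  funext i
  match i with
  | 0 => exact h0
  | 1 => exact h1
  | 2 => exact h2

lemma mk_comp (v : Fin 3 → Circle) (σ : Equiv.Perm (Fin 3)) :
    Quotient.mk sym3Setoid (v ∘ σ) = Quotient.mk sym3Setoid v :=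
  Quotient.sound ⟨σ⁻¹, by ext i; simp⟩

lemma F_rho (x : Fin 3 → ℝ) : F (ρ x) = F x := by
  have h : E (ρ x) = E x ∘ (Equiv.swap 0 1 * Equiv.swap 1 2 : Equiv.Perm (Fin 3)) := by
    funext i
    fin_cases i <;>
      simp [E, ρ, Equiv.swap_apply_def, Circle.periodic_exp.eq, Circle.exp_add] <;> rfl
  unfold F
  rw [h, mk_comp]

lemma F_shift (x : Fin 3 → ℝ) (c : ℝ) (k : ℤ) (hc : c = k * (2*π)) :
    F (fun i => x i + c) = F x := by
  have h : E (fun i => x i + c) = E x := by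
    funext i; exact Circle.exp_eq_exp.2 ⟨k, by rw [hc]⟩
  unfold F
  rw [h]

lemma mem6 (σ : Equiv.Perm (Fin 3)) : σ = 1 ∨ σ = Equiv.swap 0 1 ∨ σ = Equiv.swap 0 2 ∨
    σ = Equiv.swap 1 2 ∨ σ = Equiv.swap 0 1 * Equiv.swap 1 2 ∨
    σ = Equiv.swap 1 2 * Equiv.swap 0 1 := by
  revert σ; decide

lemma mrange {m : ℤ} {u v : ℝ} (h : u = v + m*(2*π)) (hu0 : 0 ≤ u) (hu1 : u < 4*π)
    (hv0 : 0 ≤ v) (hv1 : v < 4*π) : m = -1 ∨ m = 0 ∨ m = 1 := by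
  have hπ := Real.pi_pos
  have l1 : (m:ℝ) < 2 := by nlinarith
  have l2 : (-2:ℝ) < (m:ℝ) := by nlinarith
  have g1 : m < 2 := by exact_mod_cast l1
  have g2 : -2 < m := by exact_mod_cast l2
  omega

section Cases
variable {a b c a' b' c' : ℝ}

set_option maxHeartbeats 2000000 in
lemma caseA {a b c a' b' c' : ℝ} (m0 m1 m2 : ℤ)
    (hab : a ≤ b) (hbc : b ≤ c) (hca : c ≤ a + 2*π) (ha0 : 0 ≤ a) (ha2 : a < 2*π)
    (hab' : a' ≤ b') (hbc' : b' ≤ c') (hca' : c' ≤ a' + 2*π) (ha0' : 0 ≤ a') (ha2' : a' < 2*π)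
    (hm0 : a = a' + m0*(2*π)) (hm1 : b = b' + m1*(2*π)) (hm2 : c = c' + m2*(2*π)) :
    (a' = a ∧ b' = b ∧ c' = c) ∨ (a' = b ∧ b' = c ∧ c' = a + 2*π) ∨
    (a' = c ∧ b' = a + 2*π ∧ c' = b + 2*π) ∨ (a = b' ∧ b = c' ∧ c = a' + 2*π) ∨
    (a = c' ∧ b = a' + 2*π ∧ c = b' + 2*π) := by
  have hπ := Real.pi_pos
  have k0 := mrange hm0 (by linarith) (by linarith) (by linarith) (by linarith)
  have k1 := mrange hm1 (by linarith) (by linarith) (by linarith) (by linarith)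
  have k2 := mrange hm2 (by linarith) (by linarith) (by linarith) (by linarith)
  rcases k0 with rfl|rfl|rfl <;> rcases k1 with rfl|rfl|rfl <;> rcases k2 with rfl|rfl|rfl <;>
    push_cast at hm0 hm1 hm2 <;>
    first
    | (exfalso; linarith)
    | exact Or.inl ⟨by linarith, by linarith, by linarith⟩
    | exact Or.inr (Or.inl ⟨by linarith, by linarith, by linarith⟩)
    | exact Or.inr (Or.inr (Or.inl ⟨by linarith, by linarith, by linarith⟩))
    | exact Or.inr (Or.inr (Or.inr (Or.inl ⟨by linarith, by linarith, by linarith⟩)))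
    | exact Or.inr (Or.inr (Or.inr (Or.inr ⟨by linarith, by linarith, by linarith⟩)))

set_option maxHeartbeats 2000000 in
lemma caseB {a b c a' b' c' : ℝ} (m0 m1 m2 : ℤ)
    (hab : a ≤ b) (hbc : b ≤ c) (hca : c ≤ a + 2*π) (ha0 : 0 ≤ a) (ha2 : a < 2*π)
    (hab' : a' ≤ b') (hbc' : b' ≤ c') (hca' : c' ≤ a' + 2*π) (ha0' : 0 ≤ a') (ha2' : a' < 2*π)
    (hm0 : b = a' + m0*(2*π)) (hm1 : a = b' + m1*(2*π)) (hm2 : c = c' + m2*(2*π)) :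
    (a' = a ∧ b' = b ∧ c' = c) ∨ (a' = b ∧ b' = c ∧ c' = a + 2*π) ∨
    (a' = c ∧ b' = a + 2*π ∧ c' = b + 2*π) ∨ (a = b' ∧ b = c' ∧ c = a' + 2*π) ∨
    (a = c' ∧ b = a' + 2*π ∧ c = b' + 2*π) := by
  have hπ := Real.pi_pos
  have k0 := mrange hm0 (by linarith) (by linarith) (by linarith) (by linarith)
  have k1 := mrange hm1 (by linarith) (by linarith) (by linarith) (by linarith)
  have k2 := mrange hm2 (by linarith) (by linarith) (by linarith) (by linarith)
  rcases k0 with rfl|rfl|rfl <;> rcases k1 with rfl|rfl|rfl <;> rcases k2 with rfl|rfl|rfl <;>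
    push_cast at hm0 hm1 hm2 <;>
    first
    | (exfalso; linarith)
    | exact Or.inl ⟨by linarith, by linarith, by linarith⟩
    | exact Or.inr (Or.inl ⟨by linarith, by linarith, by linarith⟩)
    | exact Or.inr (Or.inr (Or.inl ⟨by linarith, by linarith, by linarith⟩))
    | exact Or.inr (Or.inr (Or.inr (Or.inl ⟨by linarith, by linarith, by linarith⟩)))
    | exact Or.inr (Or.inr (Or.inr (Or.inr ⟨by linarith, by linarith, by linarith⟩)))

set_option maxHeartbeats 2000000 in
lemma caseC {a b c a' b' c' : ℝ} (m0 m1 m2 : ℤ)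
    (hab : a ≤ b) (hbc : b ≤ c) (hca : c ≤ a + 2*π) (ha0 : 0 ≤ a) (ha2 : a < 2*π)
    (hab' : a' ≤ b') (hbc' : b' ≤ c') (hca' : c' ≤ a' + 2*π) (ha0' : 0 ≤ a') (ha2' : a' < 2*π)
    (hm0 : c = a' + m0*(2*π)) (hm1 : b = b' + m1*(2*π)) (hm2 : a = c' + m2*(2*π)) :
    (a' = a ∧ b' = b ∧ c' = c) ∨ (a' = b ∧ b' = c ∧ c' = a + 2*π) ∨
    (a' = c ∧ b' = a + 2*π ∧ c' = b + 2*π) ∨ (a = b' ∧ b = c' ∧ c = a' + 2*π) ∨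
    (a = c' ∧ b = a' + 2*π ∧ c = b' + 2*π) := by
  have hπ := Real.pi_pos
  have k0 := mrange hm0 (by linarith) (by linarith) (by linarith) (by linarith)
  have k1 := mrange hm1 (by linarith) (by linarith) (by linarith) (by linarith)
  have k2 := mrange hm2 (by linarith) (by linarith) (by linarith) (by linarith)
  rcases k0 with rfl|rfl|rfl <;> rcases k1 with rfl|rfl|rfl <;> rcases k2 with rfl|rfl|rfl <;>
    push_cast at hm0 hm1 hm2 <;>
    first
    | (exfalso; linarith)
    | exact Or.inl ⟨by linarith, by linarith, by linarith⟩
    | exact Or.inr (Or.inl ⟨by linarith, by linarith, by linarith⟩)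
    | exact Or.inr (Or.inr (Or.inl ⟨by linarith, by linarith, by linarith⟩))
    | exact Or.inr (Or.inr (Or.inr (Or.inl ⟨by linarith, by linarith, by linarith⟩)))
    | exact Or.inr (Or.inr (Or.inr (Or.inr ⟨by linarith, by linarith, by linarith⟩)))

set_option maxHeartbeats 2000000 in
lemma caseD {a b c a' b' c' : ℝ} (m0 m1 m2 : ℤ)
    (hab : a ≤ b) (hbc : b ≤ c) (hca : c ≤ a + 2*π) (ha0 : 0 ≤ a) (ha2 : a < 2*π)
    (hab' : a' ≤ b') (hbc' : b' ≤ c') (hca' : c' ≤ a' + 2*π) (ha0' : 0 ≤ a') (ha2' : a' < 2*π)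
    (hm0 : a = a' + m0*(2*π)) (hm1 : c = b' + m1*(2*π)) (hm2 : b = c' + m2*(2*π)) :
    (a' = a ∧ b' = b ∧ c' = c) ∨ (a' = b ∧ b' = c ∧ c' = a + 2*π) ∨
    (a' = c ∧ b' = a + 2*π ∧ c' = b + 2*π) ∨ (a = b' ∧ b = c' ∧ c = a' + 2*π) ∨
    (a = c' ∧ b = a' + 2*π ∧ c = b' + 2*π) := by
  have hπ := Real.pi_pos
  have k0 := mrange hm0 (by linarith) (by linarith) (by linarith) (by linarith)
  have k1 := mrange hm1 (by linarith) (by linarith) (by linarith) (by linarith)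
  have k2 := mrange hm2 (by linarith) (by linarith) (by linarith) (by linarith)
  rcases k0 with rfl|rfl|rfl <;> rcases k1 with rfl|rfl|rfl <;> rcases k2 with rfl|rfl|rfl <;>
    push_cast at hm0 hm1 hm2 <;>
    first
    | (exfalso; linarith)
    | exact Or.inl ⟨by linarith, by linarith, by linarith⟩
    | exact Or.inr (Or.inl ⟨by linarith, by linarith, by linarith⟩)
    | exact Or.inr (Or.inr (Or.inl ⟨by linarith, by linarith, by linarith⟩))
    | exact Or.inr (Or.inr (Or.inr (Or.inl ⟨by linarith, by linarith, by linarith⟩)))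
    | exact Or.inr (Or.inr (Or.inr (Or.inr ⟨by linarith, by linarith, by linarith⟩)))

set_option maxHeartbeats 2000000 in
lemma caseE {a b c a' b' c' : ℝ} (m0 m1 m2 : ℤ)
    (hab : a ≤ b) (hbc : b ≤ c) (hca : c ≤ a + 2*π) (ha0 : 0 ≤ a) (ha2 : a < 2*π)
    (hab' : a' ≤ b') (hbc' : b' ≤ c') (hca' : c' ≤ a' + 2*π) (ha0' : 0 ≤ a') (ha2' : a' < 2*π)
    (hm0 : b = a' + m0*(2*π)) (hm1 : c = b' + m1*(2*π)) (hm2 : a = c' + m2*(2*π)) :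
    (a' = a ∧ b' = b ∧ c' = c) ∨ (a' = b ∧ b' = c ∧ c' = a + 2*π) ∨
    (a' = c ∧ b' = a + 2*π ∧ c' = b + 2*π) ∨ (a = b' ∧ b = c' ∧ c = a' + 2*π) ∨
    (a = c' ∧ b = a' + 2*π ∧ c = b' + 2*π) := by
  have hπ := Real.pi_pos
  have k0 := mrange hm0 (by linarith) (by linarith) (by linarith) (by linarith)
  have k1 := mrange hm1 (by linarith) (by linarith) (by linarith) (by linarith)
  have k2 := mrange hm2 (by linarith) (by linarith) (by linarith) (by linarith)
  rcases k0 with rfl|rfl|rfl <;> rcases k1 with rfl|rfl|rfl <;> rcases k2 with rfl|rfl|rfl <;>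
    push_cast at hm0 hm1 hm2 <;>
    first
    | (exfalso; linarith)
    | exact Or.inl ⟨by linarith, by linarith, by linarith⟩
    | exact Or.inr (Or.inl ⟨by linarith, by linarith, by linarith⟩)
    | exact Or.inr (Or.inr (Or.inl ⟨by linarith, by linarith, by linarith⟩))
    | exact Or.inr (Or.inr (Or.inr (Or.inl ⟨by linarith, by linarith, by linarith⟩)))
    | exact Or.inr (Or.inr (Or.inr (Or.inr ⟨by linarith, by linarith, by linarith⟩)))

set_option maxHeartbeats 2000000 in
lemma caseF {a b c a' b' c' : ℝ} (m0 m1 m2 : ℤ)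
    (hab : a ≤ b) (hbc : b ≤ c) (hca : c ≤ a + 2*π) (ha0 : 0 ≤ a) (ha2 : a < 2*π)
    (hab' : a' ≤ b') (hbc' : b' ≤ c') (hca' : c' ≤ a' + 2*π) (ha0' : 0 ≤ a') (ha2' : a' < 2*π)
    (hm0 : c = a' + m0*(2*π)) (hm1 : a = b' + m1*(2*π)) (hm2 : b = c' + m2*(2*π)) :
    (a' = a ∧ b' = b ∧ c' = c) ∨ (a' = b ∧ b' = c ∧ c' = a + 2*π) ∨
    (a' = c ∧ b' = a + 2*π ∧ c' = b + 2*π) ∨ (a = b' ∧ b = c' ∧ c = a' + 2*π) ∨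
    (a = c' ∧ b = a' + 2*π ∧ c = b' + 2*π) := by
  have hπ := Real.pi_pos
  have k0 := mrange hm0 (by linarith) (by linarith) (by linarith) (by linarith)
  have k1 := mrange hm1 (by linarith) (by linarith) (by linarith) (by linarith)
  have k2 := mrange hm2 (by linarith) (by linarith) (by linarith) (by linarith)
  rcases k0 with rfl|rfl|rfl <;> rcases k1 with rfl|rfl|rfl <;> rcases k2 with rfl|rfl|rfl <;>
    push_cast at hm0 hm1 hm2 <;>
    first
    | (exfalso; linarith)
    | exact Or.inl ⟨by linarith, by linarith, by linarith⟩
    | exact Or.inr (Or.inl ⟨by linarith, by linarith, by linarith⟩)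
    | exact Or.inr (Or.inr (Or.inl ⟨by linarith, by linarith, by linarith⟩))
    | exact Or.inr (Or.inr (Or.inr (Or.inl ⟨by linarith, by linarith, by linarith⟩)))
    | exact Or.inr (Or.inr (Or.inr (Or.inr ⟨by linarith, by linarith, by linarith⟩)))


end Cases

lemma classify {x x' : Fin 3 → ℝ} (hx : srt x) (h0 : 0 ≤ x 0) (h2 : x 0 < 2*π)
    (hx' : srt x') (h0' : 0 ≤ x' 0) (h2' : x' 0 < 2*π) (h : F x = F x') :
    x' = x ∨ x' = ρ x ∨ x' = ρ (ρ x) ∨ x = ρ x' ∨ x = ρ (ρ x') := by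
  obtain ⟨σ, hσ⟩ := Quotient.exact h
  have hp : ∀ i, Circle.exp (x (σ i)) = Circle.exp (x' i) := fun i => congrFun hσ i
  obtain ⟨hab, hbc, hca⟩ := hx
  obtain ⟨hab', hbc', hca'⟩ := hx'
  have build : (x' 0 = x 0 ∧ x' 1 = x 1 ∧ x' 2 = x 2) ∨
      (x' 0 = x 1 ∧ x' 1 = x 2 ∧ x' 2 = x 0 + 2*π) ∨
      (x' 0 = x 2 ∧ x' 1 = x 0 + 2*π ∧ x' 2 = x 1 + 2*π) ∨
      (x 0 = x' 1 ∧ x 1 = x' 2 ∧ x 2 = x' 0 + 2*π) ∨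
      (x 0 = x' 2 ∧ x 1 = x' 0 + 2*π ∧ x 2 = x' 1 + 2*π) →
      x' = x ∨ x' = ρ x ∨ x' = ρ (ρ x) ∨ x = ρ x' ∨ x = ρ (ρ x') := by
    rintro (⟨e0,e1,e2⟩|⟨e0,e1,e2⟩|⟨e0,e1,e2⟩|⟨e0,e1,e2⟩|⟨e0,e1,e2⟩)
    · exact Or.inl (ext3 e0 e1 e2)
    · exact Or.inr (Or.inl (ext3 e0 e1 e2))
    · exact Or.inr (Or.inr (Or.inl (ext3 e0 e1 e2)))
    · exact Or.inr (Or.inr (Or.inr (Or.inl (ext3 e0 e1 e2))))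
    · exact Or.inr (Or.inr (Or.inr (Or.inr (ext3 e0 e1 e2))))
  rcases mem6 σ with rfl|rfl|rfl|rfl|rfl|rfl
  · obtain ⟨m0, hm0⟩ := Circle.exp_eq_exp.1 (hp 0)
    obtain ⟨m1, hm1⟩ := Circle.exp_eq_exp.1 (hp 1)
    obtain ⟨m2, hm2⟩ := Circle.exp_eq_exp.1 (hp 2)
    have e0 : x 0 = x' 0 + (m0:ℝ)*(2*π) := hm0
    have e1 : x 1 = x' 1 + (m1:ℝ)*(2*π) := hm1
    have e2 : x 2 = x' 2 + (m2:ℝ)*(2*π) := hm2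
    exact build (caseA m0 m1 m2 hab hbc hca h0 h2 hab' hbc' hca' h0' h2' e0 e1 e2)
  · obtain ⟨m0, hm0⟩ := Circle.exp_eq_exp.1 (hp 0)
    obtain ⟨m1, hm1⟩ := Circle.exp_eq_exp.1 (hp 1)
    obtain ⟨m2, hm2⟩ := Circle.exp_eq_exp.1 (hp 2)
    have e0 : x 1 = x' 0 + (m0:ℝ)*(2*π) := hm0
    have e1 : x 0 = x' 1 + (m1:ℝ)*(2*π) := hm1
    have e2 : x 2 = x' 2 + (m2:ℝ)*(2*π) := hm2
    exact build (caseB m0 m1 m2 hab hbc hca h0 h2 hab' hbc' hca' h0' h2' e0 e1 e2)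
  · obtain ⟨m0, hm0⟩ := Circle.exp_eq_exp.1 (hp 0)
    obtain ⟨m1, hm1⟩ := Circle.exp_eq_exp.1 (hp 1)
    obtain ⟨m2, hm2⟩ := Circle.exp_eq_exp.1 (hp 2)
    have e0 : x 2 = x' 0 + (m0:ℝ)*(2*π) := hm0
    have e1 : x 1 = x' 1 + (m1:ℝ)*(2*π) := hm1
    have e2 : x 0 = x' 2 + (m2:ℝ)*(2*π) := hm2
    exact build (caseC m0 m1 m2 hab hbc hca h0 h2 hab' hbc' hca' h0' h2' e0 e1 e2)
  · obtain ⟨m0, hm0⟩ := Circle.exp_eq_exp.1 (hp 0)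
    obtain ⟨m1, hm1⟩ := Circle.exp_eq_exp.1 (hp 1)
    obtain ⟨m2, hm2⟩ := Circle.exp_eq_exp.1 (hp 2)
    have e0 : x 0 = x' 0 + (m0:ℝ)*(2*π) := hm0
    have e1 : x 2 = x' 1 + (m1:ℝ)*(2*π) := hm1
    have e2 : x 1 = x' 2 + (m2:ℝ)*(2*π) := hm2
    exact build (caseD m0 m1 m2 hab hbc hca h0 h2 hab' hbc' hca' h0' h2' e0 e1 e2)
  · obtain ⟨m0, hm0⟩ := Circle.exp_eq_exp.1 (hp 0)
    obtain ⟨m1, hm1⟩ := Circle.exp_eq_exp.1 (hp 1)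
    obtain ⟨m2, hm2⟩ := Circle.exp_eq_exp.1 (hp 2)
    have e0 : x 1 = x' 0 + (m0:ℝ)*(2*π) := hm0
    have e1 : x 2 = x' 1 + (m1:ℝ)*(2*π) := hm1
    have e2 : x 0 = x' 2 + (m2:ℝ)*(2*π) := hm2
    exact build (caseE m0 m1 m2 hab hbc hca h0 h2 hab' hbc' hca' h0' h2' e0 e1 e2)
  · obtain ⟨m0, hm0⟩ := Circle.exp_eq_exp.1 (hp 0)
    obtain ⟨m1, hm1⟩ := Circle.exp_eq_exp.1 (hp 1)
    obtain ⟨m2, hm2⟩ := Circle.exp_eq_exp.1 (hp 2)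
    have e0 : x 2 = x' 0 + (m0:ℝ)*(2*π) := hm0
    have e1 : x 0 = x' 1 + (m1:ℝ)*(2*π) := hm1
    have e2 : x 1 = x' 2 + (m2:ℝ)*(2*π) := hm2
    exact build (caseF m0 m1 m2 hab hbc hca h0 h2 hab' hbc' hca' h0' h2' e0 e1 e2)


lemma normalize (u : ℝ) : ∃ k : ℤ, 0 ≤ u + k*(2*π) ∧ u + k*(2*π) < 2*π := by
  have h2π : (0:ℝ) < 2*π := by positivity
  have key : u + (-⌊u/(2*π)⌋ : ℤ)*(2*π) = (2*π) * Int.fract (u/(2*π)) := by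
    rw [Int.fract]; push_cast; field_simp; ring
  refine ⟨-⌊u/(2*π)⌋, ?_, ?_⟩
  · have h := Int.fract_nonneg (u/(2*π))
    nlinarith
  · have h := Int.fract_lt_one (u/(2*π))
    nlinarith

lemma rho0 (x : Fin 3 → ℝ) : ρ x 0 = x 1 := rfl
lemma rho1 (x : Fin 3 → ℝ) : ρ x 1 = x 2 := rfl
lemma rho2 (x : Fin 3 → ℝ) : ρ x 2 = x 0 + 2*π := rfl
lemma bt0 (m : ℝ) : bt m 0 = m - 2*π/3 := rfl
lemma bt1 (m : ℝ) : bt m 1 = m := rfl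
lemma bt2 (m : ℝ) : bt m 2 = m + 2*π/3 := rfl
lemma shr_apply (t : ℝ) (x : Fin 3 → ℝ) (i : Fin 3) :
    shr t x i = (1-t) * x i + t * bt (μ x) i := rfl

lemma shr_rho (x : Fin 3 → ℝ) (t : ℝ) : shr t (ρ x) = ρ (shr t x) := by
  refine ext3 ?_ ?_ ?_ <;>
    simp only [shr_apply, rho0, rho1, rho2, bt0, bt1, bt2, μ] <;> ring

lemma rho_srt {x : Fin 3 → ℝ} (h : srt x) : srt (ρ x) := by
  obtain ⟨h1, h2, h3⟩ := h
  refine ⟨?_, ?_, ?_⟩ <;> simp only [rho0, rho1, rho2] <;> linarith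

lemma shr_srt {t : ℝ} {x : Fin 3 → ℝ} (h0 : 0 ≤ t) (h1 : t ≤ 1) (h : srt x) : srt (shr t x) := by
  obtain ⟨ha, hb, hc⟩ := h
  have hπ := Real.pi_pos
  refine ⟨?_, ?_, ?_⟩ <;> simp only [shr_apply, bt0, bt1, bt2, μ] <;> nlinarith

lemma shr_shift (x : Fin 3 → ℝ) (t c : ℝ) :
    shr t (fun i => x i + c) = fun i => shr t x i + c := by
  refine ext3 ?_ ?_ ?_ <;>
    simp only [shr_apply, bt0, bt1, bt2, μ] <;> ring

lemma shr_zero (x : Fin 3 → ℝ) : shr 0 x = x := by funext i; simp [shr_apply]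
lemma shr_one (x : Fin 3 → ℝ) : shr 1 x = bt (μ x) := by funext i; simp [shr_apply]

lemma F_shr_rho (x : Fin 3 → ℝ) (t : ℝ) : F (shr t (ρ x)) = F (shr t x) := by
  rw [shr_rho, F_rho]

lemma F_shr_eq {x x' : Fin 3 → ℝ} (hx : srt x) (hx' : srt x') (h : F x = F x')
    {t : ℝ} : F (shr t x) = F (shr t x') := by
  obtain ⟨k, hk0, hk1⟩ := normalize (x 0)
  obtain ⟨k', hk0', hk1'⟩ := normalize (x' 0)
  set y : Fin 3 → ℝ := fun i => x i + k*(2*π) with hy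
  set y' : Fin 3 → ℝ := fun i => x' i + k'*(2*π) with hy'
  have hsy : srt y := by
    obtain ⟨h1, h2, h3⟩ := hx
    exact ⟨by simp only [hy]; linarith, by simp only [hy]; linarith, by simp only [hy]; linarith⟩
  have hsy' : srt y' := by
    obtain ⟨h1, h2, h3⟩ := hx'
    exact ⟨by simp only [hy']; linarith, by simp only [hy']; linarith,
      by simp only [hy']; linarith⟩
  have hFy : F y = F x := F_shift x _ k rfl
  have hFy' : F y' = F x' := F_shift x' _ k' rfl
  have hsh : F (shr t y) = F (shr t x) := by
    rw [hy, shr_shift, F_shift (shr t x) _ k rfl]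
  have hsh' : F (shr t y') = F (shr t x') := by
    rw [hy', shr_shift, F_shift (shr t x') _ k' rfl]
  rw [← hsh, ← hsh']
  have hcl := classify hsy hk0 hk1 hsy' hk0' hk1' (by rw [hFy, hFy', h])
  rcases hcl with e|e|e|e|e
  · rw [e]
  · rw [e, F_shr_rho]
  · rw [e, F_shr_rho, F_shr_rho]
  · rw [e, F_shr_rho]
  · rw [e, F_shr_rho, F_shr_rho]

lemma cont_E : Continuous E :=
  continuous_pi fun i => Circle.exp.continuous.comp (continuous_apply i)

lemma cont_mk : Continuous (Quotient.mk sym3Setoid) := continuous_coinduced_rng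

lemma cont_F : Continuous F := cont_mk.comp cont_E

lemma rep_exists (v : Fin 3 → Circle) :
    ∃ x : Fin 3 → ℝ, srt x ∧ 0 ≤ x 0 ∧ x 0 < 2*π ∧ F x = Quotient.mk sym3Setoid v := by
  classical
  have hπ := Real.pi_pos
  set a : Fin 3 → ℝ := fun i => Complex.arg (v i) with ha
  set τ := Tuple.sort a with hτ
  have hmono := Tuple.monotone_sort a
  set y : Fin 3 → ℝ := a ∘ τ with hy
  have hyl : ∀ i, -π < y i := fun i => Complex.neg_pi_lt_arg _
  have hyu : ∀ i, y i ≤ π := fun i => Complex.arg_le_pi _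
  have h01 : y 0 ≤ y 1 := hmono (by decide : (0:Fin 3) ≤ 1)
  have h12 : y 1 ≤ y 2 := hmono (by decide : (1:Fin 3) ≤ 2)
  have hEy : E y = v ∘ τ := by
    funext i
    exact Circle.exp_arg (v (τ i))
  have hFy : F y = Quotient.mk sym3Setoid v := by
    unfold F
    rw [hEy, mk_comp]
  by_cases hneg : y 0 < 0
  · refine ⟨fun i => y i + 2*π, ⟨?_, ?_, ?_⟩, ?_, ?_, ?_⟩
    · simpa using h01
    · simpa using h12
    · simp only
      linarith [hyl 0, hyu 2]
    · simp only
      linarith [hyl 0]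
    · simp only
      linarith
    · rw [F_shift y (2*π) 1 (by ring)]
      exact hFy
  · push_neg at hneg
    refine ⟨y, ⟨h01, h12, ?_⟩, hneg, ?_, hFy⟩
    · linarith [hyl 0, hyu 2]
    · linarith [hyu 0]

lemma rep_exists' (q : Sym3Circle) :
    ∃ x : Fin 3 → ℝ, srt x ∧ 0 ≤ x 0 ∧ x 0 < 2*π ∧ F x = q :=
  Quotient.inductionOn q rep_exists

def crep (q : Sym3Circle) : Fin 3 → ℝ := (rep_exists' q).choose

lemma crep_spec (q : Sym3Circle) :
    srt (crep q) ∧ 0 ≤ crep q 0 ∧ crep q 0 < 2*π ∧ F (crep q) = q :=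
  (rep_exists' q).choose_spec

/-- the symmetrization relation as a set of pairs -/
lemma isClosed_rel : IsClosed {p : (Fin 3 → Circle) × (Fin 3 → Circle) |
    ∃ σ : Equiv.Perm (Fin 3), p.1 ∘ σ = p.2} := by
  have h : {p : (Fin 3 → Circle) × (Fin 3 → Circle) | ∃ σ : Equiv.Perm (Fin 3), p.1 ∘ σ = p.2}
      = ⋃ σ : Equiv.Perm (Fin 3), {p | p.1 ∘ σ = p.2} := by
    ext p; simp [Set.mem_iUnion]
  rw [h]
  refine isClosed_iUnion_of_finite fun σ => ?_
  exact isClosed_eq (continuous_pi fun i => (continuous_apply (σ i)).comp continuous_fst)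
    continuous_snd

lemma isOpenMap_mk : IsOpenMap (Quotient.mk sym3Setoid) := by
  intro U hU
  have h : (Quotient.mk sym3Setoid) ⁻¹' ((Quotient.mk sym3Setoid) '' U) =
      ⋃ σ : Equiv.Perm (Fin 3), (fun v : Fin 3 → Circle => v ∘ σ) ⁻¹' U := by
    ext w
    constructor
    · rintro ⟨u, hu, he⟩
      obtain ⟨σ, hσ⟩ := Quotient.exact he
      refine Set.mem_iUnion.2 ⟨σ⁻¹, ?_⟩
      have he2 : w ∘ ⇑(σ⁻¹) = u := by
        rw [← hσ]; funext i; simp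
      show w ∘ ⇑(σ⁻¹) ∈ U
      rw [he2]; exact hu
    · intro hw
      obtain ⟨σ, hσ⟩ := Set.mem_iUnion.1 hw
      exact ⟨w ∘ σ, hσ, mk_comp w σ⟩
  rw [isOpen_coinduced]
  show IsOpen (Quotient.mk sym3Setoid ⁻¹' (Quotient.mk sym3Setoid '' U))
  rw [h]
  exact isOpen_iUnion fun σ => hU.preimage (continuous_pi fun i => continuous_apply (σ i))

instance : T2Space Sym3Circle := by
  refine ⟨fun q1 q2 hne => ?_⟩
  obtain ⟨u, rfl⟩ := Quotient.exists_rep q1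
  obtain ⟨w, rfl⟩ := Quotient.exists_rep q2
  have hnotin : (u, w) ∉ {p : (Fin 3 → Circle) × (Fin 3 → Circle) |
      ∃ σ : Equiv.Perm (Fin 3), p.1 ∘ σ = p.2} := by
    intro hr
    exact hne (Quotient.sound hr)
  have hmem : {p : (Fin 3 → Circle) × (Fin 3 → Circle) |
      ∃ σ : Equiv.Perm (Fin 3), p.1 ∘ σ = p.2}ᶜ ∈ nhds (u, w) :=
    isClosed_rel.isOpen_compl.mem_nhds hnotin
  rw [nhds_prod_eq] at hmem
  obtain ⟨U, hU, V, hV, hUV⟩ := Filter.mem_prod_iff.1 hmem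
  obtain ⟨U', hU'sub, hU'open, hU'mem⟩ := mem_nhds_iff.1 hU
  obtain ⟨V', hV'sub, hV'open, hV'mem⟩ := mem_nhds_iff.1 hV
  refine ⟨Quotient.mk sym3Setoid '' U', Quotient.mk sym3Setoid '' V',
    isOpenMap_mk U' hU'open, isOpenMap_mk V' hV'open,
    ⟨u, hU'mem, rfl⟩, ⟨w, hV'mem, rfl⟩, ?_⟩
  rw [Set.disjoint_left]
  rintro q ⟨u', hu', hequ⟩ ⟨w', hw', heqw⟩
  have hr := Quotient.exact (hequ.trans heqw.symm)
  have : (u', w') ∈ U ×ˢ V := ⟨hU'sub hu', hV'sub hw'⟩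
  exact (hUV this) hr

def pfun : (Fin 3 → Circle) → Circle := fun v => v 0 * v 1 * v 2

lemma pfun_inv : ∀ a b : Fin 3 → Circle, sym3Setoid.r a b → pfun a = pfun b := by
  rintro a b ⟨σ, rfl⟩
  show a 0 * a 1 * a 2 = a (σ 0) * a (σ 1) * a (σ 2)
  rw [← Fin.prod_univ_three a, ← Fin.prod_univ_three (fun i => a (σ i))]
  exact (Equiv.prod_comp σ a).symm

def pC : C(Sym3Circle, Circle) :=
  ⟨Quotient.lift pfun pfun_inv,
    Continuous.quotient_lift
      (((continuous_apply (0:Fin 3)).mul (continuous_apply 1)).mul (continuous_apply 2)) _⟩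

lemma pC_F (x : Fin 3 → ℝ) : pC (F x) = Circle.exp (x 0 + x 1 + x 2) := by
  show pfun (E x) = _
  unfold pfun E
  rw [← Circle.exp_add, ← Circle.exp_add]

lemma bt_step (m : ℝ) : bt (m + 2*π/3) = ρ (bt m) := by
  refine ext3 ?_ ?_ ?_ <;> simp only [rho0, rho1, rho2, bt0, bt1, bt2] <;> ring

lemma F_bt_step (m : ℝ) : F (bt (m + 2*π/3)) = F (bt m) := by
  rw [bt_step, F_rho]

lemma F_bt_period (m : ℝ) (k : ℤ) : F (bt (m + k*((2*π)/3))) = F (bt m) := by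
  induction k using Int.induction_on with
  | zero => norm_num
  | succ i ih =>
      have h : m + ((i:ℤ)+1 : ℤ)*((2*π)/3) = (m + (i:ℤ)*((2*π)/3)) + 2*π/3 := by
        push_cast; ring
      rw [h, F_bt_step, ih]
  | pred i ih =>
      have h : (m + (-(i:ℤ)-1 : ℤ)*((2*π)/3)) + 2*π/3 = m + (-(i:ℤ) : ℤ)*((2*π)/3) := by
        push_cast; ring
      rw [← ih, ← F_bt_step (m + (-(i:ℤ)-1 : ℤ)*((2*π)/3)), h]

def sfun : Circle → Sym3Circle := fun w => F (bt (Complex.arg w / 3))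

lemma sfun_exp (θ : ℝ) : sfun (Circle.exp θ) = F (bt (θ/3)) := by
  obtain ⟨k, hk⟩ := Circle.exp_eq_exp.1 (Circle.exp_arg (Circle.exp θ))
  unfold sfun
  rw [hk]
  have h : (θ + k*(2*π))/3 = θ/3 + k*((2*π)/3) := by ring
  rw [h, F_bt_period]

lemma cont_bt : Continuous bt := by
  refine continuous_pi fun i => ?_
  fin_cases i
  · exact continuous_id.sub continuous_const
  · exact continuous_id
  · exact continuous_id.add continuous_const

lemma cont_sfun : Continuous sfun := by
  have hψc : Continuous (fun θ : Set.Icc (0:ℝ) (2*π) => Circle.exp θ) :=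
    Circle.exp.continuous.comp continuous_subtype_val
  have hψs : Function.Surjective (fun θ : Set.Icc (0:ℝ) (2*π) => Circle.exp θ) := by
    intro w
    have hπ := Real.pi_pos
    rcases le_or_gt 0 (Complex.arg w) with hc|hc
    · exact ⟨⟨Complex.arg w, hc, by linarith [Complex.arg_le_pi (w:ℂ)]⟩, Circle.exp_arg w⟩
    · refine ⟨⟨Complex.arg w + 2*π, by linarith [Complex.neg_pi_lt_arg (w:ℂ)],
        by linarith⟩, ?_⟩
      show Circle.exp (Complex.arg w + 2*π) = w
      rw [Circle.exp_add_two_pi]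
      exact Circle.exp_arg w
  have hq : IsQuotientMap (fun θ : Set.Icc (0:ℝ) (2*π) => Circle.exp θ) :=
    (hψc.isClosedMap).isQuotientMap hψc hψs
  rw [hq.continuous_iff]
  have h : sfun ∘ (fun θ : Set.Icc (0:ℝ) (2*π) => Circle.exp θ) =
      fun θ : Set.Icc (0:ℝ) (2*π) => F (bt ((θ:ℝ)/3)) := funext fun θ => sfun_exp θ
  rw [h]
  exact cont_F.comp (cont_bt.comp ((continuous_subtype_val).div_const 3))

def sC : C(Circle, Sym3Circle) := ⟨sfun, cont_sfun⟩

def DSet : Set (Fin 3 → ℝ) := {x | srt x ∧ 0 ≤ x 0 ∧ x 0 ≤ 2*π}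

lemma isClosed_DSet : IsClosed DSet := by
  have h : DSet = ({x : Fin 3 → ℝ | x 0 ≤ x 1} ∩ {x | x 1 ≤ x 2} ∩ {x | x 2 ≤ x 0 + 2*π}
      ∩ {x | 0 ≤ x 0} ∩ {x | x 0 ≤ 2*π}) := by
    ext x
    simp only [DSet, srt, Set.mem_setOf_eq, Set.mem_inter_iff]
    tauto
  rw [h]
  exact ((((isClosed_le (continuous_apply 0) (continuous_apply 1)).inter
    (isClosed_le (continuous_apply 1) (continuous_apply 2))).inter
    (isClosed_le (continuous_apply 2) ((continuous_apply 0).add continuous_const))).inter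
    (isClosed_le continuous_const (continuous_apply 0))).inter
    (isClosed_le (continuous_apply 0) continuous_const)

lemma isCompact_DSet : IsCompact DSet := by
  have hπ := Real.pi_pos
  refine (isCompact_univ_pi fun _ : Fin 3 => isCompact_Icc (a := (0:ℝ)) (b := 4*π)
    ).of_isClosed_subset isClosed_DSet ?_
  rintro x ⟨⟨h1, h2, h3⟩, h4, h5⟩
  rw [Set.mem_univ_pi]
  intro i
  have e : x i = x 0 ∨ x i = x 1 ∨ x i = x 2 := by
    match i with
    | 0 => exact Or.inl rfl
    | 1 => exact Or.inr (Or.inl rfl)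
    | 2 => exact Or.inr (Or.inr rfl)
  rcases e with e|e|e <;> rw [Set.mem_Icc, e] <;> exact ⟨by linarith, by linarith⟩

instance : CompactSpace DSet := isCompact_iff_compactSpace.1 isCompact_DSet

lemma cont_mu : Continuous μ := by
  unfold μ
  fun_prop

lemma cont_shr : Continuous (fun q : ℝ × (Fin 3 → ℝ) => shr q.1 q.2) := by
  refine continuous_pi fun i => ?_
  show Continuous fun q : ℝ × (Fin 3 → ℝ) => (1 - q.1) * q.2 i + q.1 * bt (μ q.2) i
  have hbt : Continuous fun q : ℝ × (Fin 3 → ℝ) => bt (μ q.2) i :=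
    (continuous_apply i).comp (cont_bt.comp (cont_mu.comp continuous_snd))
  have happ : Continuous fun q : ℝ × (Fin 3 → ℝ) => q.2 i :=
    (continuous_apply i).comp continuous_snd
  exact ((continuous_const.sub continuous_fst).mul happ).add (continuous_fst.mul hbt)

def Hfun : unitInterval × Sym3Circle → Sym3Circle :=
  fun z => F (shr (1 - (z.1:ℝ)) (crep z.2))

lemma Hfun_F (t : unitInterval) {x : Fin 3 → ℝ} (hx : srt x) :
    Hfun (t, F x) = F (shr (1 - (t:ℝ)) x) := by
  obtain ⟨h1, _, _, h4⟩ := crep_spec (F x)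
  exact F_shr_eq h1 hx h4

lemma cont_Hfun : Continuous Hfun := by
  have hΨc : Continuous
      (fun z : unitInterval × DSet => ((z.1, F z.2) : unitInterval × Sym3Circle)) :=
    continuous_fst.prodMk (cont_F.comp (continuous_subtype_val.comp continuous_snd))
  have hΨs : Function.Surjective
      (fun z : unitInterval × DSet => ((z.1, F z.2) : unitInterval × Sym3Circle)) := by
    rintro ⟨t, q⟩
    obtain ⟨h1, h2, h3, h4⟩ := crep_spec q
    exact ⟨(t, ⟨crep q, h1, h2, le_of_lt h3⟩), by simp only [h4]⟩
  have hq := (hΨc.isClosedMap).isQuotientMap hΨc hΨs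
  rw [hq.continuous_iff]
  have h : Hfun ∘ (fun z : unitInterval × DSet => ((z.1, F z.2) : unitInterval × Sym3Circle)) =
      fun z : unitInterval × DSet => F (shr (1 - (z.1:ℝ)) (z.2:Fin 3 → ℝ)) := by
    funext z
    exact Hfun_F z.1 z.2.2.1
  rw [h]
  exact cont_F.comp (cont_shr.comp
    ((continuous_const.sub (continuous_subtype_val.comp continuous_fst)).prodMk
      (continuous_subtype_val.comp continuous_snd)))

def Hty : ContinuousMap.Homotopy (sC.comp pC) (ContinuousMap.id Sym3Circle) where
  toContinuousMap := ⟨Hfun, cont_Hfun⟩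
  map_zero_left q := by
    obtain ⟨h1, h2, h3, h4⟩ := crep_spec q
    show F (shr (1 - ((0:unitInterval):ℝ)) (crep q)) = sC (pC q)
    conv_rhs => rw [← h4]
    show F (shr (1 - ((0:unitInterval):ℝ)) (crep q)) = sfun (pC (F (crep q)))
    rw [pC_F]
    have hsum : crep q 0 + crep q 1 + crep q 2 = 3 * μ (crep q) := by unfold μ; ring
    rw [hsum, sfun_exp]
    have h3' : (3 * μ (crep q))/3 = μ (crep q) := by ring
    rw [h3']
    norm_num [shr_one]
  map_one_left q := by
    show F (shr (1 - ((1:unitInterval):ℝ)) (crep q)) = q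
    norm_num [shr_zero]
    exact (crep_spec q).2.2.2

lemma ps_id : pC.comp sC = ContinuousMap.id Circle := by
  apply ContinuousMap.ext
  intro w
  show pC (sfun w) = w
  unfold sfun
  rw [pC_F]
  have h : bt (Complex.arg w / 3) 0 + bt (Complex.arg w / 3) 1 + bt (Complex.arg w / 3) 2
      = Complex.arg w := by
    simp only [bt0, bt1, bt2]; ring
  rw [h]
  exact Circle.exp_arg w

end
end Sym3Aux

/-- The third symmetric power of the circle is homotopy equivalent to S¹. -/
theorem sym3_circle_homotopyEquiv_circle :
    Nonempty (ContinuousMap.HomotopyEquiv Sym3Circle Circle) := by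
  refine ⟨⟨Sym3Aux.pC, Sym3Aux.sC, ⟨Sym3Aux.Hty⟩, ?_⟩⟩
  rw [Sym3Aux.ps_id]
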